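/- Fundamental increase of mean fitness along replicator trajectories: let A be a symmetric n × n real matrix and let x : ℝ → Δ be a solution of the replicator dynamics (each x_i differentiable with x_i'(t) = x_i(t)((A x(t))_i − x(t) · A x(t))). Then the average payoff ū(t) = x(t) · A x(t) is differentiable and satisfies ū'(t) = 2 Σ_{i=1}^n x_i(t) ((A x(t))_i − ū(t))² ≥ 0; in particular the mean average payoff is nondecreasing along every trajectory. -/

import Mathlib

/-- Increase of mean fitness along replicator trajectories: for a symmetric
payoff matrix A and a solution x of the replicator dynamics with values in Δ,
the average payoff ū(t) = x(t) · A x(t) is differentiable with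
ū'(t) = 2 Σ_i x_i(t)((A x(t))_i − ū(t))² ≥ 0, hence nondecreasing. -/
theorem mean_fitness_increases {n : ℕ} (A : Matrix (Fin n) (Fin n) ℝ)
    (hsymm : ∀ i j, A i j = A j i)
    (x : ℝ → Fin n → ℝ)
    (hmem : ∀ t, x t ∈ stdSimplex ℝ (Fin n))
    (hderiv : ∀ (i : Fin n) (t : ℝ),
      HasDerivAt (fun τ => x τ i)
        (x t i * ((∑ j, A i j * x t j) - ∑ k, ∑ j, x t k * A k j * x t j)) t) :
    (∀ t : ℝ,
      HasDerivAt (fun τ => ∑ k, ∑ j, x τ k * A k j * x τ j)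
        (2 * ∑ i, x t i *
          ((∑ j, A i j * x t j) - ∑ k, ∑ j, x t k * A k j * x t j) ^ 2) t ∧
      0 ≤ 2 * ∑ i, x t i *
          ((∑ j, A i j * x t j) - ∑ k, ∑ j, x t k * A k j * x t j) ^ 2) ∧
    Monotone (fun t => ∑ k, ∑ j, x t k * A k j * x t j) := by
  have key : ∀ t : ℝ,
      HasDerivAt (fun τ => ∑ k, ∑ j, x τ k * A k j * x τ j)
        (2 * ∑ i, x t i *
          ((∑ j, A i j * x t j) - ∑ k, ∑ j, x t k * A k j * x t j) ^ 2) t ∧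
      0 ≤ 2 * ∑ i, x t i *
          ((∑ j, A i j * x t j) - ∑ k, ∑ j, x t k * A k j * x t j) ^ 2 := by
    intro t
    set u : Fin n → ℝ := fun i => ∑ j, A i j * x t j with hu
    set ub : ℝ := ∑ k, ∑ j, x t k * A k j * x t j with hub
    set d : Fin n → ℝ := fun i => x t i * (u i - ub) with hd
    have hsum1 : ∑ k, x t k = 1 := (hmem t).2
    have hxu : ∑ k, x t k * u k = ub := by
      rw [hub]
      refine Finset.sum_congr rfl fun k _ => ?_
      rw [hu, Finset.mul_sum]
      exact Finset.sum_congr rfl fun j _ => by ring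
    have hd0 : ∑ k, d k = 0 := by
      have : ∀ k, d k = x t k * u k - ub * x t k := fun k => by rw [hd]; ring
      rw [Finset.sum_congr rfl fun k _ => this k, Finset.sum_sub_distrib,
        ← Finset.mul_sum, hsum1, hxu, mul_one, sub_self]
    have hD : HasDerivAt (fun τ => ∑ k, ∑ j, x τ k * A k j * x τ j)
        (∑ k, ∑ j, (d k * A k j * x t j + x t k * A k j * d j)) t := by
      refine HasDerivAt.fun_sum fun k _ => HasDerivAt.fun_sum fun j _ => ?_
      exact ((hderiv k t).mul_const (A k j)).mul (hderiv j t)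
    have h1 : ∑ k, ∑ j, (d k * A k j * x t j + x t k * A k j * d j)
        = 2 * ∑ i, x t i * (u i - ub) ^ 2 := by
      have e1 : ∑ k, ∑ j, (d k * A k j * x t j + x t k * A k j * d j)
          = (∑ k, d k * u k) + ∑ j, d j * u j := by
        simp only [Finset.sum_add_distrib]
        congr 1
        · refine Finset.sum_congr rfl fun k _ => ?_
          rw [hu, Finset.mul_sum]
          exact Finset.sum_congr rfl fun j _ => by ring
        · rw [Finset.sum_comm]
          refine Finset.sum_congr rfl fun j _ => ?_
          rw [hu, Finset.mul_sum]
          refine Finset.sum_congr rfl fun k _ => ?_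
          rw [hsymm k j]; ring
      have e2 : ∑ k, d k * u k = ∑ k, x t k * (u k - ub) ^ 2 := by
        have : ∀ k, d k * u k = x t k * (u k - ub) ^ 2 + ub * d k := fun k => by
          rw [hd]; ring
        rw [Finset.sum_congr rfl fun k _ => this k, Finset.sum_add_distrib,
          ← Finset.mul_sum, hd0, mul_zero, add_zero]
      rw [e1, e2]; ring
    refine ⟨h1 ▸ hD, ?_⟩
    have : 0 ≤ ∑ i, x t i * (u i - ub) ^ 2 :=
      Finset.sum_nonneg fun i _ => mul_nonneg ((hmem t).1 i) (sq_nonneg _)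
    linarith
  refine ⟨key, ?_⟩
  have hdiff : ∀ t : ℝ, DifferentiableAt ℝ (fun τ => ∑ k, ∑ j, x τ k * A k j * x τ j) t :=
    fun t => (key t).1.differentiableAt
  apply monotone_of_deriv_nonneg
  · exact fun t => hdiff t
  · intro t
    rw [(key t).1.deriv]
    exact (key t).2
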